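/- Let N be a bounded normal operator in a Krein space. A point λ is of two-sided positive type for N (λ ∈ σ₊(N) and λ̄ ∈ σ₊(N⁺)) if and only if 0 is a spectral point of positive type of the Krein-selfadjoint operator A(λ) = (N⁺ - λ̄)(N - λ). -/

import Mathlib

open Filter Topology ContinuousLinearMap

noncomputable section

variable {H : Type*} [NormedAddCommGroup H] [InnerProductSpace ℂ H] [CompleteSpace H]

def kadj (J T : H →L[ℂ] H) : H →L[ℂ] H := J ∘L (ContinuousLinearMap.adjoint T) ∘L J

def ApproxEig (T : H →L[ℂ] H) (l : ℂ) (x : ℕ → H) : Prop :=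
  (∀ n, ‖x n‖ = 1) ∧ Tendsto (fun n => T (x n) - l • x n) atTop (nhds 0)

def approxSpec (T : H →L[ℂ] H) : Set ℂ := {l | ∃ x : ℕ → H, ApproxEig T l x}

def posType (J T : H →L[ℂ] H) : Set ℂ :=
  {l | l ∈ approxSpec T ∧ ∀ x : ℕ → H, ApproxEig T l x →
      0 < Filter.liminf (fun n => (inner ℂ (J (x n)) (x n) : ℂ).re) Filter.atTop}

set_option linter.unusedSectionVars false

/-! ### Auxiliary lemmas -/

theorem kadj_kadj (J T : H →L[ℂ] H) (hJ : ContinuousLinearMap.adjoint J = J) (hJ2 : J ∘L J = 1) :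
    kadj J (kadj J T) = T := by
  simp only [kadj, adjoint_comp, adjoint_adjoint, hJ]
  calc J ∘L ((J ∘L T ∘L J) ∘L J) = (J ∘L J) ∘L T ∘L (J ∘L J) := by
        simp [ContinuousLinearMap.comp_assoc]
    _ = T := by rw [hJ2]; simp [ContinuousLinearMap.one_def]

theorem kadj_sub_smul (J N : H →L[ℂ] H) (hJ2 : J ∘L J = 1) (l : ℂ) :
    kadj J (N - l • 1) = kadj J N - (starRingEnd ℂ) l • 1 := by
  simp only [kadj, map_sub]
  have h1 : ContinuousLinearMap.adjoint (l • (1 : H →L[ℂ] H)) = (starRingEnd ℂ) l • 1 := by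
    rw [LinearIsometryEquiv.map_smulₛₗ]
    simp [ContinuousLinearMap.one_def, ContinuousLinearMap.adjoint_id]
  rw [h1]
  rw [ContinuousLinearMap.sub_comp, ContinuousLinearMap.comp_sub]
  congr 1
  rw [ContinuousLinearMap.smul_comp, ContinuousLinearMap.comp_smul,
    ContinuousLinearMap.one_def, ContinuousLinearMap.id_comp, hJ2,
    ← ContinuousLinearMap.one_def]

theorem krein_inner (J T : H →L[ℂ] H) (hJ2 : J ∘L J = 1) (u y : H) :
    (inner ℂ (J (kadj J T u)) y : ℂ) = inner ℂ (J u) (T y) := by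
  have : J (kadj J T u) = ContinuousLinearMap.adjoint T (J u) := by
    have := congrFun (congrArg DFunLike.coe hJ2) (ContinuousLinearMap.adjoint T (J u))
    simpa [kadj] using this
  rw [this, ContinuousLinearMap.adjoint_inner_left]

theorem approxEig_comp {T : H →L[ℂ] H} {l : ℂ} {x : ℕ → H} (h : ApproxEig T l x)
    {φ : ℕ → ℕ} (hφ : StrictMono φ) : ApproxEig T l (x ∘ φ) :=
  ⟨fun n => h.1 (φ n), h.2.comp hφ.tendsto_atTop⟩

theorem abs_krein_le (J : H →L[ℂ] H) (x : H) (hx : ‖x‖ = 1) :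
    |(inner ℂ (J x) x : ℂ).re| ≤ ‖J‖ := by
  calc |(inner ℂ (J x) x : ℂ).re| ≤ ‖(inner ℂ (J x) x : ℂ)‖ := Complex.abs_re_le_norm _
    _ ≤ ‖J x‖ * ‖x‖ := norm_inner_le_norm _ _
    _ ≤ (‖J‖ * ‖x‖) * ‖x‖ := by gcongr; exact J.le_opNorm x
    _ = ‖J‖ := by rw [hx]; ring

theorem exists_subseq_small {g : ℕ → H} (h : ∀ ε > (0:ℝ), ∃ᶠ n in atTop, ‖g n‖ < ε) :
    ∃ ψ : ℕ → ℕ, StrictMono ψ ∧ Tendsto (fun n => g (ψ n)) atTop (nhds 0) := by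
  obtain ⟨ψ, hψ, hP⟩ := Filter.extraction_forall_of_frequently
    (P := fun k n => ‖g n‖ < 1 / (k + 1)) (fun k => h _ (by positivity))
  refine ⟨ψ, hψ, ?_⟩
  rw [tendsto_zero_iff_norm_tendsto_zero]
  refine squeeze_zero (fun n => norm_nonneg _) (fun n => (hP n).le) ?_
  exact tendsto_one_div_add_atTop_nhds_zero_nat

theorem tendsto_krein_zero (J A : H →L[ℂ] H) {x : ℕ → H} (hx : ∀ n, ‖x n‖ = 1)
    (hA : Tendsto (fun n => A (x n)) atTop (nhds 0)) :
    Tendsto (fun n => (inner ℂ (J (A (x n))) (x n) : ℂ).re) atTop (nhds 0) := by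
  apply squeeze_zero_norm (a := fun n => ‖J‖ * ‖A (x n)‖)
  · intro n
    calc ‖(inner ℂ (J (A (x n))) (x n) : ℂ).re‖ ≤ ‖(inner ℂ (J (A (x n))) (x n) : ℂ)‖ :=
          Complex.abs_re_le_norm _
      _ ≤ ‖J (A (x n))‖ * ‖x n‖ := norm_inner_le_norm _ _
      _ ≤ (‖J‖ * ‖A (x n)‖) * 1 := by
          rw [hx n]; gcongr; exact J.le_opNorm _
      _ = ‖J‖ * ‖A (x n)‖ := by ring
  · have := (tendsto_zero_iff_norm_tendsto_zero.mp hA).const_mul ‖J‖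
    simpa using this

theorem not_eventually_norm_ge (J B : H →L[ℂ] H)
    (hpos : ∀ x : ℕ → H, ApproxEig B 0 x →
      0 < Filter.liminf (fun n => (inner ℂ (J (x n)) (x n) : ℂ).re) Filter.atTop)
    (u : ℕ → H) (hBu : Tendsto (fun n => B (u n)) atTop (nhds 0))
    (hJu : Tendsto (fun n => (inner ℂ (J (u n)) (u n) : ℂ).re) atTop (nhds 0))
    {ε : ℝ} (hε : 0 < ε) (hub : ∀ᶠ n in atTop, ε ≤ ‖u n‖) : False := by
  obtain ⟨K, hK⟩ := eventually_atTop.mp hub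
  set y : ℕ → H := fun n => ((‖u (n + K)‖)⁻¹ : ℂ) • u (n + K) with hy
  have hun : ∀ n, ‖u (n + K)‖ ≠ 0 := fun n =>
    ne_of_gt (lt_of_lt_of_le hε (hK _ (Nat.le_add_left K n)))
  have hy1 : ∀ n, ‖y n‖ = 1 := by
    intro n
    rw [hy]
    simp only [norm_smul, norm_inv, Complex.norm_real, Real.norm_eq_abs, abs_norm]
    exact inv_mul_cancel₀ (hun n)
  have hyA : ApproxEig B 0 y := by
    refine ⟨hy1, ?_⟩
    simp only [zero_smul, sub_zero, hy, map_smul]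
    apply squeeze_zero_norm (a := fun n => ε⁻¹ * ‖B (u (n + K))‖)
    · intro n
      rw [norm_smul, norm_inv, Complex.norm_real, Real.norm_eq_abs, abs_norm]
      have h1 : ‖u (n + K)‖⁻¹ ≤ ε⁻¹ := inv_anti₀ hε (hK _ (Nat.le_add_left K n))
      exact mul_le_mul_of_nonneg_right h1 (norm_nonneg _)
    · have h1 : Tendsto (fun n => B (u (n + K))) atTop (nhds 0) :=
        hBu.comp (tendsto_add_atTop_nat K)
      have := (tendsto_zero_iff_norm_tendsto_zero.mp h1).const_mul ε⁻¹
      simpa using this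
  have hpy := hpos y hyA
  have hcy : Tendsto (fun n => (inner ℂ (J (y n)) (y n) : ℂ).re) atTop (nhds 0) := by
    have hform : ∀ n, (inner ℂ (J (y n)) (y n) : ℂ).re
        = (‖u (n + K)‖⁻¹)^2 * (inner ℂ (J (u (n + K))) (u (n + K)) : ℂ).re := by
      intro n
      rw [hy]
      simp only [map_smul, inner_smul_left, inner_smul_right, map_inv₀, Complex.conj_ofReal]
      rw [← mul_assoc, ← Complex.ofReal_inv, ← Complex.ofReal_mul, Complex.re_ofReal_mul]
      ring
    have hw : Tendsto (fun n => (inner ℂ (J (u (n + K))) (u (n + K)) : ℂ).re) atTop (nhds 0) :=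
      hJu.comp (tendsto_add_atTop_nat K)
    apply squeeze_zero_norm
      (a := fun n => ε⁻¹ ^ 2 * ‖(inner ℂ (J (u (n + K))) (u (n + K)) : ℂ).re‖)
    · intro n
      have h1 : ‖u (n + K)‖⁻¹ ≤ ε⁻¹ := inv_anti₀ hε (hK _ (Nat.le_add_left K n))
      have h2 : (0:ℝ) ≤ ‖u (n + K)‖⁻¹ := inv_nonneg.mpr (norm_nonneg _)
      rw [hform n, norm_mul, Real.norm_eq_abs (_ ^ 2), abs_of_nonneg (pow_nonneg h2 2)]
      gcongr
    · have := (tendsto_zero_iff_norm_tendsto_zero.mp hw).const_mul (ε⁻¹ ^ 2)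
      simpa using this
  rw [hcy.liminf_eq] at hpy
  exact lt_irrefl 0 hpy

theorem exists_subseq_tendsto (J B : H →L[ℂ] H)
    (hpos : ∀ x : ℕ → H, ApproxEig B 0 x →
      0 < Filter.liminf (fun n => (inner ℂ (J (x n)) (x n) : ℂ).re) Filter.atTop)
    (u : ℕ → H) (hBu : Tendsto (fun n => B (u n)) atTop (nhds 0))
    (hJu : Tendsto (fun n => (inner ℂ (J (u n)) (u n) : ℂ).re) atTop (nhds 0)) :
    ∃ ψ : ℕ → ℕ, StrictMono ψ ∧ Tendsto (fun n => u (ψ n)) atTop (nhds 0) := by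
  apply exists_subseq_small
  intro ε hε
  by_contra hcon
  rw [not_frequently] at hcon
  exact not_eventually_norm_ge J B hpos u hBu hJu hε (hcon.mono fun n h => not_lt.mp h)

theorem twoSidedPosType_iff_zero_posType_A (J N : H →L[ℂ] H)
    (hJ : ContinuousLinearMap.adjoint J = J) (hJ2 : J ∘L J = 1)
    (hN : N ∘L kadj J N = kadj J N ∘L N) (l : ℂ) :
    (l ∈ posType J N ∧ (starRingEnd ℂ) l ∈ posType J (kadj J N)) ↔
      (0 : ℂ) ∈ posType J
        ((kadj J N - (starRingEnd ℂ) l • (1 : H →L[ℂ] H)) ∘L (N - l • (1 : H →L[ℂ] H))) := by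
  set M : H →L[ℂ] H := N - l • 1 with hMdef
  set Mp : H →L[ℂ] H := kadj J N - (starRingEnd ℂ) l • 1 with hMpdef
  set A : H →L[ℂ] H := Mp ∘L M with hAdef
  have hMapp : ∀ v, M v = N v - l • v := by
    intro v; simp [hMdef, ContinuousLinearMap.sub_apply, ContinuousLinearMap.smul_apply,
      ContinuousLinearMap.one_apply]
  have hMpapp : ∀ v, Mp v = kadj J N v - (starRingEnd ℂ) l • v := by
    intro v; simp [hMpdef, ContinuousLinearMap.sub_apply, ContinuousLinearMap.smul_apply,
      ContinuousLinearMap.one_apply]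
  have hMp : Mp = kadj J M := by rw [hMpdef, hMdef, kadj_sub_smul J N hJ2 l]
  have hMpM : kadj J Mp = M := by rw [hMp, kadj_kadj J M hJ hJ2]
  have hpt : ∀ u, N (kadj J N u) = kadj J N (N u) := fun u =>
    congrFun (congrArg DFunLike.coe hN) u
  have hcomm : ∀ v, M (Mp v) = Mp (M v) := by
    intro v
    simp only [hMapp, hMpapp, map_sub, map_smul, hpt]
    module
  -- Krein identities
  have k1 : ∀ v y : H, (inner ℂ (J (A v)) y : ℂ) = inner ℂ (J (M v)) (M y) := by
    intro v y
    have : A v = kadj J M (M v) := by rw [← hMp]; rfl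
    rw [this, krein_inner J M hJ2 (M v) y]
  have k2 : ∀ v y : H, (inner ℂ (J (A v)) y : ℂ) = inner ℂ (J (Mp v)) (Mp y) := by
    intro v y
    have : A v = kadj J Mp (Mp v) := by rw [hMpM]; exact (hcomm v).symm
    rw [this, krein_inner J Mp hJ2 (Mp v) y]
  -- ApproxEig translations
  have eigN : ∀ x : ℕ → H, ApproxEig N l x ↔
      ((∀ n, ‖x n‖ = 1) ∧ Tendsto (fun n => M (x n)) atTop (nhds 0)) := by
    intro x
    unfold ApproxEig
    have : (fun n => N (x n) - l • x n) = fun n => M (x n) := by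
      funext n; rw [hMapp]
    rw [this]
  have eigK : ∀ x : ℕ → H, ApproxEig (kadj J N) ((starRingEnd ℂ) l) x ↔
      ((∀ n, ‖x n‖ = 1) ∧ Tendsto (fun n => Mp (x n)) atTop (nhds 0)) := by
    intro x
    unfold ApproxEig
    have : (fun n => kadj J N (x n) - (starRingEnd ℂ) l • x n) = fun n => Mp (x n) := by
      funext n; rw [hMpapp]
    rw [this]
  have eigA : ∀ x : ℕ → H, ApproxEig A 0 x ↔
      ((∀ n, ‖x n‖ = 1) ∧ Tendsto (fun n => A (x n)) atTop (nhds 0)) := by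
    intro x
    unfold ApproxEig
    have : (fun n => A (x n) - (0:ℂ) • x n) = fun n => A (x n) := by
      funext n; simp
    rw [this]
  have hAMM : ∀ v, A v = Mp (M v) := fun v => rfl
  constructor
  · rintro ⟨⟨⟨x0, hx0⟩, h1pos⟩, ⟨y0, hy0⟩, h2pos⟩
    rw [eigN] at hx0
    have hposMp : ∀ z : ℕ → H, ApproxEig Mp 0 z →
        0 < Filter.liminf (fun n => (inner ℂ (J (z n)) (z n) : ℂ).re) Filter.atTop := by
      intro z hz
      apply h2pos
      rw [eigK]
      refine ⟨hz.1, ?_⟩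
      have := hz.2
      simpa using this
    constructor
    · -- 0 ∈ approxSpec A
      refine ⟨x0, ?_⟩
      rw [eigA]
      refine ⟨hx0.1, ?_⟩
      have : Tendsto (fun n => Mp (M (x0 n))) atTop (nhds (Mp 0)) :=
        (Mp.continuous.tendsto 0).comp hx0.2
      simpa [hAMM, map_zero] using this
    · -- positivity for A
      intro x hx
      rw [eigA] at hx
      by_contra hc
      have hlim : Filter.liminf (fun n => (inner ℂ (J (x n)) (x n) : ℂ).re) Filter.atTop ≤ 0 :=
        not_lt.mp hc
      have hbddle : ∀ n, (inner ℂ (J (x n)) (x n) : ℂ).re ≤ ‖J‖ := fun n =>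
        (abs_le.mp (abs_krein_le J _ (hx.1 n))).2
      have hcobdd : Filter.IsCoboundedUnder (· ≥ ·) Filter.atTop
          (fun n => (inner ℂ (J (x n)) (x n) : ℂ).re) :=
        Filter.isCoboundedUnder_ge_of_le Filter.atTop hbddle
      have hfreq : ∀ k : ℕ, ∃ᶠ n in atTop, (inner ℂ (J (x n)) (x n) : ℂ).re < 1 / (k + 1) := by
        intro k
        exact Filter.frequently_lt_of_liminf_lt hcobdd
          (lt_of_le_of_lt hlim (by positivity))
      obtain ⟨φ, hφ, hφP⟩ := Filter.extraction_forall_of_frequently hfreq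
      have hxAφ : Tendsto (fun k => A (x (φ k))) atTop (nhds 0) :=
        hx.2.comp hφ.tendsto_atTop
      have hJu : Tendsto (fun k => (inner ℂ (J (M (x (φ k)))) (M (x (φ k))) : ℂ).re)
          atTop (nhds 0) := by
        have h0 := tendsto_krein_zero J A (x := fun k => x (φ k)) (fun k => hx.1 (φ k)) hxAφ
        refine h0.congr fun k => ?_
        rw [← k1]
      obtain ⟨ψ, hψ, hMψ⟩ := exists_subseq_tendsto J Mp hposMp (fun k => M (x (φ k)))
        (by refine hxAφ.congr fun k => ?_; rw [hAMM]) hJu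
      -- x ∘ φ ∘ ψ is an approximate eigensequence for N at l
      have heig : ApproxEig N l (fun j => x (φ (ψ j))) := by
        rw [eigN]
        exact ⟨fun j => hx.1 _, hMψ⟩
      have hL := h1pos _ heig
      set L := Filter.liminf
        (fun j => (inner ℂ (J (x (φ (ψ j)))) (x (φ (ψ j))) : ℂ).re) Filter.atTop with hLdef
      have hsmall : ∀ j : ℕ, (inner ℂ (J (x (φ (ψ j)))) (x (φ (ψ j))) : ℂ).re < 1 / (j + 1) := by
        intro j
        refine lt_of_lt_of_le (hφP (ψ j)) ?_
        have h0 : j ≤ ψ j := hψ.le_apply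
        have h1 : (j : ℝ) + 1 ≤ (ψ j : ℝ) + 1 := by
          have : (j : ℝ) ≤ (ψ j : ℝ) := Nat.cast_le.mpr h0
          linarith
        exact one_div_le_one_div_of_le (by positivity) h1
      have hev := tendsto_one_div_add_atTop_nhds_zero_nat.eventually
        (gt_mem_nhds (half_pos hL))
      have hfr : ∃ᶠ j in atTop,
          (inner ℂ (J (x (φ (ψ j)))) (x (φ (ψ j))) : ℂ).re ≤ L / 2 :=
        (hev.mono fun j hj => le_of_lt (lt_trans (hsmall j) hj)).frequently
      have hbel : Filter.IsBoundedUnder (· ≥ ·) Filter.atTop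
          (fun j => (inner ℂ (J (x (φ (ψ j)))) (x (φ (ψ j))) : ℂ).re) :=
        Filter.isBoundedUnder_of ⟨-‖J‖, fun j => (abs_le.mp (abs_krein_le J _ (hx.1 _))).1⟩
      have := Filter.liminf_le_of_frequently_le hfr hbel
      rw [← hLdef] at this
      linarith
  · rintro ⟨⟨xA, hxA⟩, hposA⟩
    rw [eigA] at hxA
    have hposA' : ∀ z : ℕ → H, ((∀ n, ‖z n‖ = 1) ∧ Tendsto (fun n => A (z n)) atTop (nhds 0)) →
        0 < Filter.liminf (fun n => (inner ℂ (J (z n)) (z n) : ℂ).re) Filter.atTop := by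
      intro z hz; exact hposA z ((eigA z).mpr hz)
    have haux1 : ∀ v, A (M v) = M (A v) := fun v => (hcomm (M v)).symm
    have haux2 : ∀ v, A (Mp v) = Mp (A v) := fun v => congrArg Mp (hcomm v)
    have hJAx := tendsto_krein_zero J A hxA.1 hxA.2
    constructor
    · -- l ∈ posType J N
      constructor
      · -- approxSpec
        have hBu : Tendsto (fun n => A (M (xA n))) atTop (nhds 0) := by
          have h0 : Tendsto (fun n => M (A (xA n))) atTop (nhds (M 0)) :=
            (M.continuous.tendsto 0).comp hxA.2
          rw [map_zero] at h0
          exact h0.congr fun n => (haux1 (xA n)).symm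
        have hJu : Tendsto (fun n => (inner ℂ (J (M (xA n))) (M (xA n)) : ℂ).re)
            atTop (nhds 0) := by
          refine hJAx.congr fun n => ?_
          rw [← k1]
        obtain ⟨ψ, hψ, hMψ⟩ := exists_subseq_tendsto J A
          hposA (fun n => M (xA n)) hBu hJu
        refine ⟨fun j => xA (ψ j), ?_⟩
        rw [eigN]
        exact ⟨fun j => hxA.1 _, hMψ⟩
      · -- positivity
        intro z hz
        rw [eigN] at hz
        apply hposA'
        refine ⟨hz.1, ?_⟩
        have h0 : Tendsto (fun n => Mp (M (z n))) atTop (nhds (Mp 0)) :=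
          (Mp.continuous.tendsto 0).comp hz.2
        rw [map_zero] at h0
        exact h0.congr fun n => (hAMM (z n)).symm
    · -- conj l ∈ posType J (kadj J N)
      constructor
      · have hBu : Tendsto (fun n => A (Mp (xA n))) atTop (nhds 0) := by
          have h0 : Tendsto (fun n => Mp (A (xA n))) atTop (nhds (Mp 0)) :=
            (Mp.continuous.tendsto 0).comp hxA.2
          rw [map_zero] at h0
          exact h0.congr fun n => (haux2 (xA n)).symm
        have hJu : Tendsto (fun n => (inner ℂ (J (Mp (xA n))) (Mp (xA n)) : ℂ).re)
            atTop (nhds 0) := by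
          refine hJAx.congr fun n => ?_
          rw [← k2]
        obtain ⟨ψ, hψ, hMψ⟩ := exists_subseq_tendsto J A
          hposA (fun n => Mp (xA n)) hBu hJu
        refine ⟨fun j => xA (ψ j), ?_⟩
        rw [eigK]
        exact ⟨fun j => hxA.1 _, hMψ⟩
      · intro z hz
        rw [eigK] at hz
        apply hposA'
        refine ⟨hz.1, ?_⟩
        have h0 : Tendsto (fun n => M (Mp (z n))) atTop (nhds (M 0)) :=
          (M.continuous.tendsto 0).comp hz.2
        rw [map_zero] at h0
        exact h0.congr fun n => (hcomm (z n)) ▸ (hAMM (z n)).symm
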